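/- Let λ, ρ > 0 and let A ∈ 𝕊^r be symmetric with eigendecomposition A = P diag(d) P^T. Then the unique minimizer over Z ≻ 0 of −λ·log det(Z) + (ρ/2)‖Z − A‖_F² is Z* = P diag(φ(d)) P^T, where φ(x) = (x + √(x² + 4λ/ρ))/2 is applied entrywise to d. -/

import Mathlib

open Matrix


lemma posDef_conjT_mul_mul {n : Type*} [Fintype n] [DecidableEq n]
    {A : Matrix n n ℝ} (hA : A.PosDef) (B : Matrix n n ℝ) (hB : IsUnit B.det) :
    (Bᴴ * A * B).PosDef := by
  refine PosDef.of_dotProduct_mulVec_pos (isHermitian_conjTranspose_mul_mul B hA.1) fun x hx => ?_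
  have hBx : B *ᵥ x ≠ 0 := by
    intro h
    apply hx
    have := congrArg (fun v => B⁻¹ *ᵥ v) h
    simpa [mulVec_mulVec, nonsing_inv_mul B hB] using this
  simpa only [star_mulVec, dotProduct_mulVec, vecMul_vecMul] using hA.dotProduct_mulVec_pos hBx

lemma posDef_mul_mul_transpose {n : Type*} [Fintype n] [DecidableEq n]
    {A : Matrix n n ℝ} (hA : A.PosDef) {B : Matrix n n ℝ} (hB : IsUnit B.det) :
    (B * A * Bᵀ).PosDef := by
  have h := posDef_conjT_mul_mul hA Bᵀ (by rwa [det_transpose])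
  rwa [conjTranspose_eq_transpose_of_trivial, transpose_transpose] at h

lemma trace_eq_sum_eigs {n : Type*} [Fintype n] [DecidableEq n]
    {A : Matrix n n ℝ} (hA : A.IsHermitian) :
    A.trace = ∑ i, hA.eigenvalues i := by
  simpa using hA.trace_eq_sum_eigenvalues

lemma log_det_le_trace {n : Type*} [Fintype n] [DecidableEq n]
    {B : Matrix n n ℝ} (hB : B.PosDef) :
    Real.log B.det ≤ B.trace - Fintype.card n := by
  have hev := hB.eigenvalues_pos
  rw [hB.isHermitian.det_eq_prod_eigenvalues, trace_eq_sum_eigs hB.isHermitian]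
  simp only [RCLike.ofReal_real_eq_id, id_eq]
  rw [Real.log_prod (fun i _ => (hev i).ne')]
  calc ∑ i, Real.log (hB.isHermitian.eigenvalues i)
      ≤ ∑ i, (hB.isHermitian.eigenvalues i - 1) :=
        Finset.sum_le_sum fun i _ => Real.log_le_sub_one_of_pos (hev i)
    _ = _ := by rw [Finset.sum_sub_distrib]; simp [Finset.card_univ]

open scoped MatrixOrder in
lemma log_det_tangent {n : Type*} [Fintype n] [DecidableEq n]
    {Z S : Matrix n n ℝ} (hZ : Z.PosDef) (hS : S.PosDef) :
    Real.log Z.det - Real.log S.det ≤ (S⁻¹ * Z).trace - Fintype.card n := by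
  set R := CFC.sqrt S⁻¹ with hR
  have hRR : R * R = S⁻¹ := CFC.sqrt_mul_sqrt_self S⁻¹ hS.inv.posSemidef.nonneg
  have hRherm : R.IsHermitian := (CFC.sqrt_nonneg S⁻¹).posSemidef.isHermitian
  have hRdetsq : R.det * R.det = S⁻¹.det := by rw [← det_mul, hRR]
  have hSinvdet : S⁻¹.det = (S.det)⁻¹ := by
    rw [det_nonsing_inv, Ring.inverse_eq_inv']
  have hRdet : IsUnit R.det := by
    refine isUnit_iff_ne_zero.mpr fun h => ?_
    have := hS.inv.det_pos
    rw [← hRdetsq, h, zero_mul] at this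
    exact lt_irrefl _ this
  have hRT : Rᵀ = R := by
    rw [← conjTranspose_eq_transpose_of_trivial, hRherm.eq]
  have hB : (R * Z * R).PosDef := by
    have h := posDef_mul_mul_transpose hZ hRdet
    rwa [hRT] at h
  have h1 := log_det_le_trace hB
  have hdet : (R * Z * R).det = Z.det / S.det := by
    rw [det_mul, det_mul]
    calc R.det * Z.det * R.det = Z.det * (R.det * R.det) := by ring
      _ = Z.det * (S.det)⁻¹ := by rw [hRdetsq, hSinvdet]
      _ = Z.det / S.det := (div_eq_mul_inv _ _).symm
  have htr : (R * Z * R).trace = (S⁻¹ * Z).trace := by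
    rw [trace_mul_comm, ← mul_assoc, hRR]
  rw [hdet, htr, Real.log_div hZ.det_pos.ne' hS.det_pos.ne'] at h1
  exact h1

theorem stmt12 {r : ℕ} (lam ρ : ℝ) (hlam : 0 < lam) (hρ : 0 < ρ)
    (A P : Matrix (Fin r) (Fin r) ℝ) (d : Fin r → ℝ)
    (hA : A.IsSymm) (hP : P * Pᵀ = 1) (hdecomp : A = P * Matrix.diagonal d * Pᵀ) :
    letI φ : ℝ → ℝ := fun x => (x + Real.sqrt (x ^ 2 + 4 * lam / ρ)) / 2
    letI Zstar := P * Matrix.diagonal (fun i => φ (d i)) * Pᵀ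
    letI F : Matrix (Fin r) (Fin r) ℝ → ℝ := fun Z =>
      -lam * Real.log Z.det + (ρ / 2) * ∑ i, ∑ j, (Z i j - A i j) ^ 2
    Zstar.PosDef ∧
      (∀ Z : Matrix (Fin r) (Fin r) ℝ, Z.PosDef → F Zstar ≤ F Z) ∧
      (∀ Z : Matrix (Fin r) (Fin r) ℝ, Z.PosDef → F Z = F Zstar → Z = Zstar) := by
  beta_reduce
  set φ : ℝ → ℝ := fun x => (x + Real.sqrt (x ^ 2 + 4 * lam / ρ)) / 2 with hφdef
  set Zstar := P * Matrix.diagonal (fun i => φ (d i)) * Pᵀ with hZdef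
  set F : Matrix (Fin r) (Fin r) ℝ → ℝ := fun Z =>
    -lam * Real.log Z.det + (ρ / 2) * ∑ i, ∑ j, (Z i j - A i j) ^ 2 with hFdef
  -- scalar facts
  have hφpos : ∀ x : ℝ, 0 < φ x := by
    intro x
    have h1 : |x| < Real.sqrt (x ^ 2 + 4 * lam / ρ) := by
      rw [← Real.sqrt_sq_eq_abs]
      have h0 : 0 < 4 * lam / ρ := by positivity
      exact Real.sqrt_lt_sqrt (sq_nonneg x) (by linarith)
    have h2 : -x ≤ |x| := neg_le_abs x
    show 0 < (x + Real.sqrt (x ^ 2 + 4 * lam / ρ)) / 2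
    linarith
  have hφeq : ∀ x : ℝ, φ x - x = (lam / ρ) * (φ x)⁻¹ := by
    intro x
    have hs : Real.sqrt (x ^ 2 + 4 * lam / ρ) ^ 2 = x ^ 2 + 4 * lam / ρ :=
      Real.sq_sqrt (by positivity)
    have hx := hφpos x
    show (x + Real.sqrt (x ^ 2 + 4 * lam / ρ)) / 2 - x
        = (lam / ρ) * ((x + Real.sqrt (x ^ 2 + 4 * lam / ρ)) / 2)⁻¹
    have key : ((x + Real.sqrt (x ^ 2 + 4 * lam / ρ)) / 2 - x)
        * ((x + Real.sqrt (x ^ 2 + 4 * lam / ρ)) / 2) = lam / ρ := by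
      linear_combination hs / 4
    exact (eq_mul_inv_iff_mul_eq₀ hx.ne').mpr key
  set c : Fin r → ℝ := fun i => φ (d i) with hc
  have hcpos : ∀ i, 0 < c i := fun i => hφpos (d i)
  -- matrix facts
  have hPdet : IsUnit P.det :=
    IsUnit.of_mul_eq_one Pᵀ.det (by rw [← det_mul, hP, det_one])
  have hPtP : Pᵀ * P = 1 := mul_eq_one_comm.mp hP
  have hZstar : Zstar.PosDef :=
    posDef_mul_mul_transpose (Matrix.PosDef.diagonal hcpos) hPdet
  have hcancel : ∀ X : Matrix (Fin r) (Fin r) ℝ, Pᵀ * (P * X) = X := by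
    intro X; rw [← Matrix.mul_assoc, hPtP, one_mul]
  have hSinv : Zstar⁻¹ = P * Matrix.diagonal (fun i => (c i)⁻¹) * Pᵀ := by
    refine (inv_eq_right_inv ?_)
    show P * Matrix.diagonal c * Pᵀ * (P * Matrix.diagonal (fun i => (c i)⁻¹) * Pᵀ) = 1
    simp only [Matrix.mul_assoc]
    rw [hcancel, ← Matrix.mul_assoc (Matrix.diagonal c), diagonal_mul_diagonal]
    have : (fun i => c i * (c i)⁻¹) = fun _ => (1 : ℝ) := by
      funext i; exact mul_inv_cancel₀ (hcpos i).ne'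
    rw [this, diagonal_one, one_mul, hP]
  have hSdet : IsUnit Zstar.det := isUnit_iff_ne_zero.mpr hZstar.det_pos.ne'
  have hSA : Zstar - A = (lam / ρ) • Zstar⁻¹ := by
    rw [hSinv, hdecomp]
    have h1 : Matrix.diagonal c - Matrix.diagonal d
        = (lam / ρ) • Matrix.diagonal (fun i => (c i)⁻¹) := by
      ext i j
      by_cases h : i = j
      · subst h
        simp only [Matrix.sub_apply, Matrix.diagonal_apply_eq, Matrix.smul_apply, smul_eq_mul]
        exact hφeq (d i)
      · simp [Matrix.diagonal_apply_ne _ h, h]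
    calc P * Matrix.diagonal c * Pᵀ - P * Matrix.diagonal d * Pᵀ
        = P * (Matrix.diagonal c - Matrix.diagonal d) * Pᵀ := by
          rw [Matrix.mul_sub, Matrix.sub_mul]
      _ = P * ((lam / ρ) • Matrix.diagonal (fun i => (c i)⁻¹)) * Pᵀ := by rw [h1]
      _ = (lam / ρ) • (P * Matrix.diagonal (fun i => (c i)⁻¹) * Pᵀ) := by
          rw [Matrix.mul_smul, Matrix.smul_mul]
  -- entrywise version
  have hSAe : ∀ i j, Zstar i j - A i j = (lam / ρ) * Zstar⁻¹ i j := by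
    intro i j
    have := congrFun (congrFun hSA i) j
    simpa using this
  -- main inequality
  have main : ∀ Z : Matrix (Fin r) (Fin r) ℝ, Z.PosDef →
      F Zstar + (ρ / 2) * ∑ i, ∑ j, (Z i j - Zstar i j) ^ 2 ≤ F Z := by
    intro Z hZ
    have hZsymm : ∀ i j, Z j i = Z i j := by
      intro i j
      have := hZ.isHermitian.apply i j
      simpa using this
    have hSsymm : ∀ i j, Zstar j i = Zstar i j := by
      intro i j
      have := hZstar.isHermitian.apply i j
      simpa using this
    have hSinvsymm : ∀ i j, Zstar⁻¹ j i = Zstar⁻¹ i j := by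
      intro i j
      have := hZstar.inv.isHermitian.apply i j
      simpa using this
    -- cross term equals trace expression
    have hcross : ∑ i, ∑ j, (Zstar i j - A i j) * (Z i j - Zstar i j)
        = (lam / ρ) * ((Zstar⁻¹ * Z).trace - (Fintype.card (Fin r) : ℝ)) := by
      have h1 : ∀ i j, (Zstar i j - A i j) * (Z i j - Zstar i j)
          = (lam / ρ) * (Zstar⁻¹ i j * ((Z - Zstar) j i)) := by
        intro i j
        rw [hSAe i j]
        have : (Z - Zstar) j i = Z i j - Zstar i j := by
          simp [Matrix.sub_apply, hZsymm, hSsymm]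
        rw [this]; ring
      simp only [h1]
      simp only [← Finset.mul_sum]
      congr 1
      have htr : (Zstar⁻¹ * (Z - Zstar)).trace = ∑ i, ∑ j, Zstar⁻¹ i j * (Z - Zstar) j i := by
        simp [Matrix.trace, Matrix.diag, Matrix.mul_apply]
      rw [← htr, Matrix.mul_sub, trace_sub, nonsing_inv_mul Zstar hSdet, trace_one]
    have htang := log_det_tangent hZ hZstar
    -- quadratic expansion
    have hexp : ∑ i, ∑ j, (Z i j - A i j) ^ 2
        = ∑ i, ∑ j, (Zstar i j - A i j) ^ 2
          + 2 * ∑ i, ∑ j, (Zstar i j - A i j) * (Z i j - Zstar i j)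
          + ∑ i, ∑ j, (Z i j - Zstar i j) ^ 2 := by
      rw [Finset.mul_sum, ← Finset.sum_add_distrib, ← Finset.sum_add_distrib]
      refine Finset.sum_congr rfl fun i _ => ?_
      rw [Finset.mul_sum, ← Finset.sum_add_distrib, ← Finset.sum_add_distrib]
      exact Finset.sum_congr rfl fun j _ => by ring
    show -lam * Real.log Zstar.det + (ρ / 2) * ∑ i, ∑ j, (Zstar i j - A i j) ^ 2
          + (ρ / 2) * ∑ i, ∑ j, (Z i j - Zstar i j) ^ 2
        ≤ -lam * Real.log Z.det + (ρ / 2) * ∑ i, ∑ j, (Z i j - A i j) ^ 2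
    rw [hexp]
    have hmul : lam * (Real.log Z.det - Real.log Zstar.det)
        ≤ lam * ((Zstar⁻¹ * Z).trace - (Fintype.card (Fin r) : ℝ)) :=
      mul_le_mul_of_nonneg_left htang hlam.le
    have hρne : ρ ≠ 0 := hρ.ne'
    have hc2 : (ρ / 2) * (2 * ∑ i, ∑ j, (Zstar i j - A i j) * (Z i j - Zstar i j))
        = lam * ((Zstar⁻¹ * Z).trace - (Fintype.card (Fin r) : ℝ)) := by
      rw [hcross]; field_simp
    nlinarith [hc2, hmul]
  refine ⟨hZstar, fun Z hZ => ?_, fun Z hZ hFeq => ?_⟩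
  · have h := main Z hZ
    simp only [hFdef] at h
    have hN : 0 ≤ ∑ i, ∑ j, (Z i j - Zstar i j) ^ 2 :=
      Finset.sum_nonneg fun i _ => Finset.sum_nonneg fun j _ => sq_nonneg _
    nlinarith
  · have h := main Z hZ
    simp only [hFdef] at h
    have hN : 0 ≤ ∑ i, ∑ j, (Z i j - Zstar i j) ^ 2 :=
      Finset.sum_nonneg fun i _ => Finset.sum_nonneg fun j _ => sq_nonneg _
    have hN0 : ∑ i, ∑ j, (Z i j - Zstar i j) ^ 2 = 0 := by
      nlinarith [hFeq, half_pos hρ]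
    ext i j
    have h1 := (Finset.sum_eq_zero_iff_of_nonneg
      (fun i _ => Finset.sum_nonneg fun j _ => sq_nonneg ((Z i j - Zstar i j)))).mp hN0
    have h2 := (Finset.sum_eq_zero_iff_of_nonneg
      (fun j _ => sq_nonneg (Z i j - Zstar i j))).mp (h1 i (Finset.mem_univ i))
    have h3 := h2 j (Finset.mem_univ j)
    have := pow_eq_zero_iff (n := 2) (by norm_num) |>.mp h3
    linarith [this]
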